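/- Let (πₙ) be probability measures on a Polish space satisfying the full LDP with speed sₙ and good rate function I. Then (πₙ) is exponentially tight with respect to sₙ: for every b > 0 there is a compact set K_b with limsup_{n→∞} (1/sₙ) log πₙ(K_b^c) ≤ -b. -/

import Mathlib

open MeasureTheory Filter

/-- `π` satisfies the large deviation principle with speed `v` and rate function `I`. -/
def SatisfiesLDP {X : Type*} [TopologicalSpace X] [MeasurableSpace X]
    (π : ℕ → Measure X) (v : ℕ → ℝ) (I : X → EReal) : Prop :=
  LowerSemicontinuous I ∧ (∀ x, 0 ≤ I x) ∧
  (∀ O : Set X, IsOpen O →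
    -(⨅ x ∈ O, I x) ≤ liminf (fun n => (((v n)⁻¹ : ℝ) : EReal) * ENNReal.log (π n O)) atTop) ∧
  (∀ C : Set X, IsClosed C →
    limsup (fun n => (((v n)⁻¹ : ℝ) : EReal) * ENNReal.log (π n C)) atTop ≤ -(⨅ x ∈ C, I x))

/-- A rate function is good if all of its level sets are compact. -/
def GoodRate {X : Type*} [TopologicalSpace X] (I : X → EReal) : Prop :=
  ∀ η : ℝ, IsCompact {x | I x ≤ (η : EReal)}

open Metric

private lemma ereal_inv_mul_le_iff {c s : ℝ} (hs : 0 < s) {L : EReal} :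
    ((s⁻¹ : ℝ) : EReal) * L ≤ (c : EReal) ↔ L ≤ ((s * c : ℝ) : EReal) := by
  rw [show ((s⁻¹ : ℝ) : EReal) * L = L / (s : EReal) by
    rw [EReal.coe_inv]; exact EReal.mul_comm _ _]
  rw [EReal.div_le_iff_le_mul (by exact_mod_cast hs) (EReal.coe_ne_top s), EReal.coe_mul]

private lemma ennreal_log_le_coe_iff (x : ENNReal) (y : ℝ) :
    ENNReal.log x ≤ (y : EReal) ↔ x ≤ ENNReal.ofReal (Real.exp y) := by
  rw [← ENNReal.log_le_log_iff (y := ENNReal.ofReal (Real.exp y)),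
    ENNReal.log_ofReal_of_pos (Real.exp_pos y), Real.log_exp]

private lemma exp_tsum_le_one : ∑' m : ℕ, ENNReal.ofReal (Real.exp (-(m + 1 : ℝ))) ≤ 1 := by
  have hq : Real.exp (-1) < 1/2 := by
    rw [Real.exp_neg]
    rw [inv_lt_comm₀ (Real.exp_pos 1) (by norm_num)]
    calc (1/2 : ℝ)⁻¹ = 2 := by norm_num
    _ < Real.exp 1 := by have := Real.exp_one_gt_d9; linarith
  have hqn : ∀ m : ℕ, Real.exp (-(m + 1 : ℝ)) = Real.exp (-1) ^ (m + 1) := by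
    intro m
    rw [← Real.exp_nat_mul]
    congr 1
    push_cast
    ring
  have hsumm : Summable (fun m : ℕ => Real.exp (-(m + 1 : ℝ))) := by
    simp_rw [hqn]
    exact (summable_geometric_of_lt_one (Real.exp_pos _).le
      (by linarith)).comp_injective (add_left_injective 1)
  rw [← ENNReal.ofReal_tsum_of_nonneg (fun m => (Real.exp_pos _).le) hsumm]
  rw [show (1 : ENNReal) = ENNReal.ofReal 1 by simp]
  apply ENNReal.ofReal_le_ofReal
  have : ∑' m : ℕ, Real.exp (-(m + 1 : ℝ)) = Real.exp (-1) * (1 - Real.exp (-1))⁻¹ := by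
    simp_rw [hqn, pow_succ, mul_comm _ (Real.exp (-1))]
    rw [tsum_mul_left, tsum_geometric_of_lt_one (Real.exp_pos _).le (by linarith)]
  rw [this]
  rw [mul_inv_le_iff₀ (by linarith)]
  linarith

private lemma key_con {X : Type*} [MetricSpace X] [CompleteSpace X] [MeasurableSpace X]
    [BorelSpace X] [SecondCountableTopology X]
    (P : ℕ → Measure X) [∀ n, IsProbabilityMeasure (P n)]
    (s : ℕ → ℝ) (hs : Tendsto s atTop atTop) (I : X → EReal)
    (hupper : ∀ C : Set X, IsClosed C →
      limsup (fun n => (((s n)⁻¹ : ℝ) : EReal) * ENNReal.log (P n C)) atTop ≤ -(⨅ x ∈ C, I x))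
    (hgood : ∀ η : ℝ, IsCompact {x | I x ≤ (η : EReal)})
    (u : ℕ → X) (hu : DenseRange u) (b : ℝ) (m : ℕ) :
    ∃ t : Finset X,
      ∀ n, P n (⋃ y ∈ t, closedBall y (1/(m+1)))ᶜ
        ≤ ENNReal.ofReal (Real.exp (s n * (-(b + m + 1)))) := by
  classical
  set r : ℝ := 1/(m+1) with hr
  have hrpos : 0 < r := by positivity
  obtain ⟨t₀, ht₀⟩ := (hgood (b + m + 2)).elim_finite_subcover (fun x : X => ball x r)
    (fun x => isOpen_ball) (fun x _ => Set.mem_iUnion.2 ⟨x, mem_ball_self hrpos⟩)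
  set U : Set X := ⋃ x ∈ t₀, ball x r with hU
  have hUopen : IsOpen U := isOpen_biUnion fun _ _ => isOpen_ball
  have hinf : ((b + m + 2 : ℝ) : EReal) ≤ ⨅ x ∈ Uᶜ, I x := by
    refine le_iInf₂ fun x hx => ?_
    by_contra hcon
    push_neg at hcon
    exact hx (ht₀ (by simpa using hcon.le))
  have hlt : limsup (fun n => (((s n)⁻¹ : ℝ) : EReal) * ENNReal.log (P n Uᶜ)) atTop
      < ((-(b + m + 1) : ℝ) : EReal) := by
    refine (hupper Uᶜ hUopen.isClosed_compl).trans_lt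
      (lt_of_le_of_lt (b := ((-(b + m + 2) : ℝ) : EReal)) ?_ ?_)
    · calc -(⨅ x ∈ Uᶜ, I x) ≤ -(((b + m + 2 : ℝ)) : EReal) := EReal.neg_le_neg_iff.2 hinf
        _ = ((-(b + m + 2) : ℝ) : EReal) := by rw [EReal.coe_neg]
    · exact_mod_cast (by linarith : -(b + m + 2) < -(b + m + 1))
  obtain ⟨n₀, hn₀⟩ := eventually_atTop.1
    ((eventually_lt_of_limsup_lt hlt).and (hs.eventually_ge_atTop 1))
  have hsmall : ∀ n, ∃ N : ℕ, P n (⋃ i ∈ Finset.range N, closedBall (u i) r)ᶜ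
      ≤ ENNReal.ofReal (Real.exp (s n * (-(b + m + 1)))) := by
    intro n
    have hcover : (⋂ N : ℕ, (⋃ i ∈ Finset.range N, closedBall (u i) r)ᶜ) = ∅ := by
      ext x
      simp only [Set.mem_iInter, Set.mem_compl_iff, Set.mem_iUnion, Finset.mem_range,
        mem_closedBall, Set.mem_empty_iff_false, iff_false, not_forall, not_not]
      obtain ⟨i, hi⟩ := Metric.denseRange_iff.1 hu x r hrpos
      exact ⟨i + 1, i, lt_add_one i, hi.le⟩
    have hmono : Antitone (fun N => (⋃ i ∈ Finset.range N, closedBall (u i) r)ᶜ) := by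
      intro a bb hab
      apply Set.compl_subset_compl.2
      intro z hz
      simp only [Set.mem_iUnion, Finset.mem_range] at hz ⊢
      obtain ⟨i, hi, h⟩ := hz
      exact ⟨i, by omega, h⟩
    have htend := tendsto_measure_iInter_atTop (μ := P n)
      (fun N => ((isClosed_biUnion_finset
        (fun i _ => isClosed_closedBall)).measurableSet.compl).nullMeasurableSet)
      hmono ⟨0, measure_ne_top _ _⟩
    rw [hcover, measure_empty] at htend
    have hpos : (0 : ENNReal) < ENNReal.ofReal (Real.exp (s n * (-(b + m + 1)))) :=
      ENNReal.ofReal_pos.2 (Real.exp_pos _)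
    obtain ⟨N, hN⟩ := (htend.eventually_lt_const hpos).exists
    exact ⟨N, hN.le⟩
  choose N hN using hsmall
  refine ⟨t₀ ∪ (Finset.range n₀).biUnion (fun k => (Finset.range (N k)).image u), fun n => ?_⟩
  by_cases hn : n₀ ≤ n
  · obtain ⟨hflt, hs1n⟩ := hn₀ n hn
    have hspos : 0 < s n := by linarith
    have hlog : ENNReal.log (P n Uᶜ) ≤ ((s n * (-(b + m + 1)) : ℝ) : EReal) :=
      (ereal_inv_mul_le_iff hspos).1 hflt.le
    refine le_trans (measure_mono ?_) ((ennreal_log_le_coe_iff _ _).1 hlog)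
    apply Set.compl_subset_compl.2
    refine Set.iUnion₂_subset fun x hx => ?_
    intro z hz
    simp only [Set.mem_iUnion]
    exact ⟨x, Finset.mem_union_left _ hx, ball_subset_closedBall hz⟩
  · push_neg at hn
    refine le_trans (measure_mono ?_) (hN n)
    apply Set.compl_subset_compl.2
    intro z hz
    simp only [Set.mem_iUnion, Finset.mem_range] at hz ⊢
    obtain ⟨i, hi, h⟩ := hz
    exact ⟨u i, Finset.mem_union_right _ (Finset.mem_biUnion.2
      ⟨n, Finset.mem_range.2 hn, Finset.mem_image_of_mem u (Finset.mem_range.2 hi)⟩), h⟩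

theorem stmt_11 {X : Type*} [TopologicalSpace X] [PolishSpace X] [MeasurableSpace X]
    [BorelSpace X] (π : ℕ → Measure X) [∀ n, IsProbabilityMeasure (π n)]
    (s : ℕ → ℝ) (hs : Tendsto s atTop atTop)
    (I : X → EReal) (hLDP : SatisfiesLDP π s I) (hgood : GoodRate I) :
    ∀ b : ℝ, 0 < b → ∃ K : Set X, IsCompact K ∧
      limsup (fun n => (((s n)⁻¹ : ℝ) : EReal) * ENNReal.log (π n Kᶜ)) atTop ≤
        ((-b : ℝ) : EReal) := by
  intro b hb
  rcases isEmpty_or_nonempty X with h | h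
  · exfalso
    have h1 : (π 0) Set.univ = 1 := measure_univ
    rw [Set.univ_eq_empty_iff.2 h, measure_empty] at h1
    exact zero_ne_one h1
  · letI := TopologicalSpace.upgradeIsCompletelyMetrizable X
    obtain ⟨u, hu⟩ := TopologicalSpace.exists_dense_seq X
    have hupper := hLDP.2.2.2
    have key : ∀ m : ℕ, ∃ t : Finset X, ∀ n,
        π n (⋃ y ∈ t, closedBall y (1/(m+1)))ᶜ
          ≤ ENNReal.ofReal (Real.exp (s n * (-(b + m + 1)))) := by
      intro m
      exact key_con π s hs I (by exact hupper) (by exact hgood) u hu b m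
    choose T hT using key
    set F : ℕ → Set X := fun m => ⋃ y ∈ T m, closedBall y (1/(m+1)) with hF
    refine ⟨⋂ m, F m, ?_, ?_⟩
    · refine TotallyBounded.isCompact_of_isClosed (Metric.totallyBounded_iff.2 fun ε hε => ?_)
        (isClosed_iInter fun m => isClosed_biUnion_finset fun y _ => isClosed_closedBall)
      obtain ⟨m, hm⟩ := exists_nat_one_div_lt hε
      refine ⟨(T m : Set X), (T m).finite_toSet, ?_⟩
      refine (Set.iInter_subset _ m).trans ?_
      intro z hz
      simp only [hF, Set.mem_iUnion, mem_closedBall] at hz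
      obtain ⟨y, hy, hzy⟩ := hz
      simp only [Set.mem_iUnion]
      exact ⟨y, Finset.mem_coe.2 hy, mem_ball.2 (lt_of_le_of_lt hzy hm)⟩
    · refine limsup_le_of_le (by isBoundedDefault) ?_
      filter_upwards [hs.eventually_ge_atTop 1] with n hs1n
      have hspos : 0 < s n := by linarith
      have hsum : π n (⋂ m, F m)ᶜ ≤ ENNReal.ofReal (Real.exp (s n * (-b))) := by
        have h1 : π n (⋂ m, F m)ᶜ ≤ ∑' m, π n (F m)ᶜ := by
          rw [Set.compl_iInter]
          exact measure_iUnion_le _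
        have h2 : ∀ m : ℕ, π n (F m)ᶜ
            ≤ ENNReal.ofReal (Real.exp (s n * (-b)))
              * ENNReal.ofReal (Real.exp (-(m + 1 : ℝ))) := by
          intro m
          refine (hT m n).trans ?_
          rw [← ENNReal.ofReal_mul (Real.exp_pos _).le, ← Real.exp_add]
          apply ENNReal.ofReal_le_ofReal
          apply Real.exp_le_exp.2
          have h3 : (1 : ℝ) * (m + 1) ≤ s n * (m + 1) :=
            mul_le_mul_of_nonneg_right hs1n (by positivity)
          nlinarith
        calc π n (⋂ m, F m)ᶜ ≤ ∑' m, π n (F m)ᶜ := h1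
          _ ≤ ∑' m : ℕ, ENNReal.ofReal (Real.exp (s n * (-b)))
              * ENNReal.ofReal (Real.exp (-(m + 1 : ℝ))) := ENNReal.tsum_le_tsum h2
          _ = ENNReal.ofReal (Real.exp (s n * (-b)))
              * ∑' m : ℕ, ENNReal.ofReal (Real.exp (-(m + 1 : ℝ))) := ENNReal.tsum_mul_left
          _ ≤ ENNReal.ofReal (Real.exp (s n * (-b))) * 1 := mul_le_mul_right exp_tsum_le_one _
          _ = _ := mul_one _
      have hlog : ENNReal.log (π n (⋂ m, F m)ᶜ) ≤ ((s n * (-b) : ℝ) : EReal) :=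
        (ennreal_log_le_coe_iff _ _).2 hsum
      have hfin := (ereal_inv_mul_le_iff (c := -b) hspos).2 hlog
      exact hfin
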